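/- Suppose L₀ is a sequential contraction of L. Then the maximal dimension of an abelian ideal does not decrease: for every Lie ideal I of L which is abelian (IsLieAbelian I), there exists a Lie ideal I₀ of L₀ which is abelian and satisfies finrank ℝ I₀ ≥ finrank ℝ I. -/

import Mathlib

open Filter Module

/-- `L₀` is a sequential contraction of the real Lie algebra `L`: there is a sequence of
real-linear equivalences `T p : L ≃ₗ[ℝ] L₀` such that the transported brackets converge to the
bracket of `L₀`. -/
def IsSequentialContraction (L L₀ : Type*) [LieRing L] [LieAlgebra ℝ L]
    [LieRing L₀] [LieAlgebra ℝ L₀] [TopologicalSpace L₀] : Prop :=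
  ∃ T : ℕ → (L ≃ₗ[ℝ] L₀), ∀ x y : L₀,
    Tendsto (fun p => T p ⁅(T p).symm x, (T p).symm y⁆) atTop (nhds ⁅x, y⁆)


section Bilin
variable {F : Type*} [NormedAddCommGroup F] [NormedSpace ℝ F] [FiniteDimensional ℝ F]

lemma aux_bilin_expand (b : Basis (Fin (finrank ℝ F)) ℝ F) (C : F →ₗ[ℝ] F →ₗ[ℝ] F) (u v : F) :
    C u v = ∑ i, ∑ j, (b.equivFun u i * b.equivFun v j) • C (b i) (b j) := by
  conv_lhs => rw [← b.sum_equivFun u, ← b.sum_equivFun v]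
  simp only [map_sum, map_smul, LinearMap.sum_apply, LinearMap.smul_apply, Finset.smul_sum,
    smul_smul]
  rw [Finset.sum_comm]
  simp_rw [mul_comm]

lemma aux_bilin_tendsto (Bk : ℕ → (F →ₗ[ℝ] F →ₗ[ℝ] F)) (B : F →ₗ[ℝ] F →ₗ[ℝ] F)
    (hpt : ∀ x y, Tendsto (fun k => Bk k x y) atTop (nhds (B x y)))
    {xk yk : ℕ → F} {x y : F} (hx : Tendsto xk atTop (nhds x)) (hy : Tendsto yk atTop (nhds y)) :
    Tendsto (fun k => Bk k (xk k) (yk k)) atTop (nhds (B x y)) := by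
  classical
  set b := Module.finBasis ℝ F with hb
  have hcoord : ∀ (i : Fin (finrank ℝ F)) {zk : ℕ → F} {z : F}, Tendsto zk atTop (nhds z) →
      Tendsto (fun k => b.equivFun (zk k) i) atTop (nhds (b.equivFun z i)) := by
    intro i zk z hz
    have hc : Continuous (fun w : F => b.equivFun w i) := by
      have := LinearMap.continuous_of_finiteDimensional
        ((LinearMap.proj i).comp (b.equivFun : F ≃ₗ[ℝ] _).toLinearMap)
      exact this
    exact (hc.tendsto z).comp hz
  have key : Tendsto (fun k => ∑ i, ∑ j,
      (b.equivFun (xk k) i * b.equivFun (yk k) j) • Bk k (b i) (b j)) atTop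
      (nhds (∑ i, ∑ j, (b.equivFun x i * b.equivFun y j) • B (b i) (b j))) := by
    refine tendsto_finset_sum _ fun i _ => tendsto_finset_sum _ fun j _ => ?_
    exact Tendsto.smul ((hcoord i hx).mul (hcoord j hy)) (hpt (b i) (b j))
  rw [aux_bilin_expand b B x y]
  exact key.congr fun k => (aux_bilin_expand b (Bk k) _ _).symm
end Bilin

/-- The bracket of a Lie algebra transported along a linear equivalence, as a bilinear map. -/
noncomputable def brMap {A F : Type*} [LieRing A] [LieAlgebra ℝ A] [AddCommGroup F] [Module ℝ F]
    (e : A ≃ₗ[ℝ] F) : F →ₗ[ℝ] F →ₗ[ℝ] F :=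
  LinearMap.mk₂ ℝ (fun x y => e ⁅e.symm x, e.symm y⁆)
    (fun x₁ x₂ y => by simp [add_lie]) (fun c x y => by simp [smul_lie])
    (fun x y₁ y₂ => by simp [lie_add]) (fun c x y => by simp [lie_smul])

@[simp] lemma brMap_apply {A F : Type*} [LieRing A] [LieAlgebra ℝ A] [AddCommGroup F] [Module ℝ F]
    (e : A ≃ₗ[ℝ] F) (x y : F) : brMap e x y = e ⁅e.symm x, e.symm y⁆ := rfl


/-- Under a sequential contraction, the maximal dimension of an abelian ideal does not
decrease. -/
theorem abelian_ideal_finrank_le_of_contraction {L L₀ : Type*} [LieRing L] [LieAlgebra ℝ L] [LieRing L₀] [LieAlgebra ℝ L₀]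
    [Module.Finite ℝ L] [Module.Finite ℝ L₀]
    [TopologicalSpace L₀] [IsTopologicalAddGroup L₀] [ContinuousSMul ℝ L₀] [T2Space L₀]
    (h : IsSequentialContraction L L₀) :
    ∀ I : LieIdeal ℝ L, IsLieAbelian I →
      ∃ I₀ : LieIdeal ℝ L₀, IsLieAbelian I₀ ∧ finrank ℝ I₀ ≥ finrank ℝ I := by
  classical
  obtain ⟨T, hT⟩ := h
  intro I hI
  set n := finrank ℝ L₀ with hn
  set F := EuclideanSpace ℝ (Fin n) with hF
  have hfr : finrank ℝ L₀ = finrank ℝ F := (finrank_euclideanSpace_fin (𝕜 := ℝ) (n := n)).symm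
  let ν : L₀ ≃ₗ[ℝ] F := LinearEquiv.ofFinrankEq _ _ hfr
  have hνc : Continuous ν.toLinearMap := LinearMap.continuous_of_finiteDimensional _
  let e : ℕ → (L ≃ₗ[ℝ] F) := fun k => (T k).trans ν
  set d := finrank ℝ I with hd
  let W : ℕ → Submodule ℝ F := fun k => (LieSubmodule.toSubmodule I).map (e k).toLinearMap
  have hWrank : ∀ k, finrank ℝ (W k) = d := fun k => LinearEquiv.finrank_map_eq (e k) _
  -- pointwise convergence of brackets
  have hpt : ∀ x y : F, Tendsto (fun k => brMap (e k) x y) atTop (nhds (brMap ν x y)) := by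
    intro x y
    have h1 := hT (ν.symm x) (ν.symm y)
    have heq : (fun k => brMap (e k) x y)
        = fun k => ν (T k ⁅(T k).symm (ν.symm x), (T k).symm (ν.symm y)⁆) := by
      funext k; simp [brMap_apply, e]
    rw [brMap_apply, heq]
    exact (hνc.tendsto _).comp h1
  -- orthonormal bases of the W k
  let ob : ∀ k, OrthonormalBasis (Fin d) ℝ (W k) := fun k =>
    (stdOrthonormalBasis ℝ (W k)).reindex (finCongr (hWrank k))
  let u : ℕ → Fin d → F := fun k i => (ob k i : F)
  have humem : ∀ k i, u k i ∈ W k := fun k i => (ob k i).2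
  have horm : ∀ k, Orthonormal ℝ (u k) := by
    intro k
    have h1 := (ob k).orthonormal
    rw [orthonormal_iff_ite] at h1 ⊢
    intro i j
    simpa [u, ← Submodule.coe_inner] using h1 i j
  have hmem : ∀ k, u k ∈ Metric.closedBall (0 : Fin d → F) 1 := by
    intro k
    rw [Metric.mem_closedBall, dist_zero_right]
    refine (pi_norm_le_iff_of_nonneg zero_le_one).mpr fun i => ?_
    rw [(horm k).1 i]
  obtain ⟨ul, -, φ, hφ, hconv⟩ :=
    (isCompact_closedBall (0 : Fin d → F) 1).tendsto_subseq hmem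
  have hui : ∀ i, Tendsto (fun k => u (φ k) i) atTop (nhds (ul i)) := fun i =>
    tendsto_pi_nhds.mp hconv i
  have hulorm : Orthonormal ℝ ul := by
    rw [orthonormal_iff_ite]
    intro i j
    have hlim : Tendsto (fun k => (inner ℝ (u (φ k) i) (u (φ k) j) : ℝ)) atTop
        (nhds (inner ℝ (ul i) (ul j))) := (hui i).inner (hui j)
    have hconst : ∀ k, (inner ℝ (u (φ k) i) (u (φ k) j) : ℝ) = if i = j then 1 else 0 :=
      fun k => (orthonormal_iff_ite.mp (horm (φ k))) i j
    exact tendsto_nhds_unique (hlim.congr hconst) tendsto_const_nhds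
  let V : Submodule ℝ F := Submodule.span ℝ (Set.range ul)
  have hVrank : finrank ℝ V = d := by
    rw [finrank_span_eq_card hulorm.linearIndependent, Fintype.card_fin]
  -- limits of sequences in the W (φ k) lie in V
  have hclose : ∀ (z : ℕ → F) (zl : F), (∀ k, z k ∈ W (φ k)) →
      Tendsto z atTop (nhds zl) → zl ∈ V := by
    intro z zl hz hzt
    have hrep : ∀ k, z k = ∑ i, (inner ℝ (u (φ k) i) (z k) : ℝ) • u (φ k) i := by
      intro k
      have h1 := (ob (φ k)).sum_repr ⟨z k, hz k⟩
      have h2 := congrArg Subtype.val h1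
      simp only [AddSubmonoidClass.coe_finset_sum, SetLike.val_smul] at h2
      have h3 : ∑ i, (inner ℝ (u (φ k) i) (z k) : ℝ) • u (φ k) i
          = ∑ i, (ob (φ k)).repr ⟨z k, hz k⟩ i • u (φ k) i := by
        refine Finset.sum_congr rfl fun i _ => ?_
        congr 1
        rw [OrthonormalBasis.repr_apply_apply, Submodule.coe_inner]
      rw [h3]
      exact h2.symm
    have hlim2 : Tendsto (fun k => ∑ i, (inner ℝ (u (φ k) i) (z k) : ℝ) • u (φ k) i) atTop
        (nhds (∑ i, (inner ℝ (ul i) zl : ℝ) • ul i)) :=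
      tendsto_finset_sum _ fun i _ => Tendsto.smul ((hui i).inner hzt) (hui i)
    have hzeq : zl = ∑ i, (inner ℝ (ul i) zl : ℝ) • ul i :=
      tendsto_nhds_unique (hzt.congr hrep) hlim2
    rw [hzeq]
    exact Submodule.sum_mem _ fun i _ =>
      Submodule.smul_mem _ _ (Submodule.subset_span ⟨i, rfl⟩)
  -- elements of V are limits of elements of the W (φ k)
  have happrox : ∀ v ∈ V, ∃ vk : ℕ → F, (∀ k, vk k ∈ W (φ k)) ∧ Tendsto vk atTop (nhds v) := by
    intro v hv
    obtain ⟨c, hc⟩ := (Submodule.mem_span_range_iff_exists_fun ℝ).mp hv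
    refine ⟨fun k => ∑ i, c i • u (φ k) i, fun k => Submodule.sum_mem _ fun i _ =>
      Submodule.smul_mem _ _ (humem (φ k) i), ?_⟩
    rw [← hc]
    exact tendsto_finset_sum _ fun i _ => tendsto_const_nhds.smul (hui i)
  have habelL : ∀ p q : L, p ∈ I → q ∈ I → ⁅p, q⁆ = (0 : L) := by
    intro p q hp hq
    have h1 := hI.trivial ⟨p, hp⟩ ⟨q, hq⟩
    exact congrArg Subtype.val h1
  have hptφ : ∀ x y : F, Tendsto (fun k => brMap (e (φ k)) x y) atTop (nhds (brMap ν x y)) :=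
    fun x y => (hpt x y).comp hφ.tendsto_atTop
  -- abelian property of V
  have habel : ∀ x ∈ V, ∀ y ∈ V, brMap ν x y = 0 := by
    intro x hx y hy
    obtain ⟨xk, hxkW, hxk⟩ := happrox x hx
    obtain ⟨yk, hykW, hyk⟩ := happrox y hy
    have hlim := aux_bilin_tendsto (fun k => brMap (e (φ k))) (brMap ν) hptφ hxk hyk
    have hzero : ∀ k, brMap (e (φ k)) (xk k) (yk k) = 0 := by
      intro k
      obtain ⟨p, hp, hpe⟩ := Submodule.mem_map.mp (hxkW k)
      obtain ⟨q, hq, hqe⟩ := Submodule.mem_map.mp (hykW k)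
      rw [← hpe, ← hqe]
      have hpq : ⁅p, q⁆ = (0 : L) := habelL p q (by simpa using hp) (by simpa using hq)
      simp [brMap_apply, hpq]
    exact tendsto_nhds_unique (hlim.congr hzero) tendsto_const_nhds
  -- ideal property of V
  have hideal : ∀ (x : F), ∀ y ∈ V, brMap ν x y ∈ V := by
    intro x y hy
    obtain ⟨yk, hykW, hyk⟩ := happrox y hy
    have hlim := aux_bilin_tendsto (fun k => brMap (e (φ k))) (brMap ν) hptφ
      (tendsto_const_nhds (x := x)) hyk
    refine hclose _ _ (fun k => ?_) hlim
    obtain ⟨q, hq, hqe⟩ := Submodule.mem_map.mp (hykW k)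
    rw [← hqe]
    refine Submodule.mem_map.mpr ⟨⁅(e (φ k)).symm x, q⁆, ?_, by simp [brMap_apply]⟩
    exact (LieSubmodule.mem_toSubmodule I).mpr (I.lie_mem (by simpa using hq))
  -- build the ideal in L₀
  let S : Submodule ℝ L₀ := V.comap ν.toLinearMap
  have hSmem : ∀ m : L₀, m ∈ S ↔ ν m ∈ V := fun m => Iff.rfl
  let I₀ : LieIdeal ℝ L₀ :=
    { S with
      lie_mem := by
        intro x m hm
        have hm' : ν m ∈ V := hm
        have hb : ν ⁅x, m⁆ = brMap ν (ν x) (ν m) := by simp [brMap_apply]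
        show ν ⁅x, m⁆ ∈ V
        rw [hb]
        exact hideal _ _ hm' }
  have hI₀mem : ∀ m : L₀, m ∈ I₀ ↔ ν m ∈ V := fun m => Iff.rfl
  have habI₀ : IsLieAbelian I₀ := by
    constructor
    rintro ⟨a, ha0⟩ ⟨b, hb0⟩
    have ha : ν a ∈ V := ha0
    have hb : ν b ∈ V := hb0
    have h0 := habel _ ha _ hb
    have h1 : ν ⁅a, b⁆ = 0 := by simpa [brMap_apply] using h0
    have h2 : ⁅a, b⁆ = 0 := by
      apply ν.injective; simpa using h1
    apply Subtype.ext
    simpa using h2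
  have hSrank : finrank ℝ S = d := by
    have hmap : S = V.map (ν.symm : F →ₗ[ℝ] L₀) := by
      ext m
      rw [Submodule.mem_comap, Submodule.mem_map_equiv]
      simp
    rw [hmap, LinearEquiv.finrank_map_eq, hVrank]
  exact ⟨I₀, habI₀, le_of_eq (by rw [hd]; exact hSrank.symm)⟩
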